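/- For any f ∈ H and the TSVD approximation with truncation parameter ε > 0 (keeping Λ = {n : σₙ > ε}), the error satisfies ‖f − P_Λ f‖ ≤ ‖f − T_N z‖ + √ε ‖z‖ for all z ∈ ℂᴺ. -/

import Mathlib

open scoped ComplexInnerProductSpace

theorem stmt_8 {H : Type*} [NormedAddCommGroup H] [InnerProductSpace ℂ H]
    {N : ℕ} (φ : Fin N → H) (σ : Fin N → ℝ)
    (v : Fin N → EuclideanSpace ℂ (Fin N)) (hv : Orthonormal ℂ v)
    (G : Matrix (Fin N) (Fin N) ℂ) (hG : ∀ m k, G m k = ⟪φ m, φ k⟫)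
    (heig : ∀ n i, G.mulVec (fun j => v n j) i = (σ n : ℂ) * v n i)
    (T : EuclideanSpace ℂ (Fin N) → H) (hT : ∀ z, T z = ∑ n, z n • φ n)
    (ξ : Fin N → H) (hξ : ∀ n, ξ n = T (v n))
    (hσ : ∀ n, 0 ≤ σ n) (ε : ℝ) (hε : 0 < ε)
    (f : H) (z : EuclideanSpace ℂ (Fin N)) :
    ‖f - ∑ n ∈ Finset.univ.filter (fun n => ε < σ n),
        (⟪ξ n, f⟫ / (σ n : ℂ)) • ξ n‖ ≤
      ‖f - T z‖ + Real.sqrt ε * ‖z‖ := by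
  rcases eq_or_ne N 0 with h0 | h0
  · subst h0
    simp only [Finset.univ_eq_empty, Finset.filter_empty, Finset.sum_empty, sub_zero, hT]
    have : ‖f‖ = ‖f - (0:H)‖ := by simp
    rw [this]
    have h1 : (0:ℝ) ≤ Real.sqrt ε * ‖z‖ := by positivity
    linarith
  haveI : Nonempty (Fin N) := ⟨⟨0, Nat.pos_of_ne_zero h0⟩⟩
  classical
  set Λ := Finset.univ.filter (fun n => ε < σ n) with hΛ
  -- inner products of ξ
  have hvi : ∀ m n, (⟪v m, v n⟫ : ℂ) = if m = n then 1 else 0 := orthonormal_iff_ite.mp hv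
  have hxi : ∀ m n, (⟪ξ m, ξ n⟫ : ℂ) = if m = n then (σ n : ℂ) else 0 := by
    intro m n
    have key : ∀ j, (∑ k, (⟪φ j, φ k⟫ : ℂ) * v n k) = (σ n : ℂ) * v n j := by
      intro j
      have h := heig n j
      rw [Matrix.mulVec, dotProduct] at h
      simp only [← hG]
      simpa using h
    have h1 : ξ m = ∑ j, v m j • φ j := by rw [hξ, hT]
    have h2 : ξ n = ∑ k, v n k • φ k := by rw [hξ, hT]
    rw [h1, h2, sum_inner]
    simp only [inner_smul_left, inner_sum, inner_smul_right]
    calc ∑ j, ∑ k, v n k * ((starRingEnd ℂ) (v m j) * ⟪φ j, φ k⟫)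
        = ∑ j, (starRingEnd ℂ) (v m j) * ((σ n : ℂ) * v n j) := by
          refine Finset.sum_congr rfl fun j _ => ?_
          rw [← key j, Finset.mul_sum]
          exact Finset.sum_congr rfl fun k _ => by ring
      _ = (σ n : ℂ) * ∑ j, (starRingEnd ℂ) (v m j) * v n j := by
          rw [Finset.mul_sum]; exact Finset.sum_congr rfl fun j _ => by ring
      _ = (σ n : ℂ) * ⟪v m, v n⟫ := by
          rw [PiLp.inner_apply]
          simp only [RCLike.inner_apply]
          congr 1; exact Finset.sum_congr rfl fun j _ => mul_comm _ _
      _ = if m = n then (σ n : ℂ) else 0 := by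
          rw [hvi, mul_ite, mul_one, mul_zero]
  -- orthonormal basis
  have hcard : Fintype.card (Fin N) = Module.finrank ℂ (EuclideanSpace ℂ (Fin N)) := by
    simp [finrank_euclideanSpace]
  set b : OrthonormalBasis (Fin N) ℂ (EuclideanSpace ℂ (Fin N)) :=
    (basisOfLinearIndependentOfCardEqFinrank hv.linearIndependent hcard).toOrthonormalBasis
      (by rwa [coe_basisOfLinearIndependentOfCardEqFinrank]) with hbdef
  have hb : ∀ i, b i = v i := by
    intro i
    rw [hbdef]
    rw [Module.Basis.coe_toOrthonormalBasis, coe_basisOfLinearIndependentOfCardEqFinrank]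
  set c : Fin N → ℂ := fun n => (⟪v n, z⟫ : ℂ) with hc
  have hzexp : z = ∑ n, c n • v n := by
    conv_lhs => rw [← b.sum_repr z]
    refine Finset.sum_congr rfl fun n _ => ?_
    rw [b.repr_apply_apply, hb]
  have hTz : T z = ∑ n, c n • ξ n := by
    rw [hT]
    calc ∑ k, z k • φ k = ∑ k, (∑ n, c n * v n k) • φ k := by
          refine Finset.sum_congr rfl fun k _ => ?_
          congr 1
          conv_lhs => rw [hzexp]
          rw [WithLp.ofLp_sum, Finset.sum_apply]; simp
      _ = ∑ n, c n • ∑ k, v n k • φ k := by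
          simp only [Finset.sum_smul, mul_smul]
          rw [Finset.sum_comm]
          simp [Finset.smul_sum]
      _ = ∑ n, c n • ξ n := by
          refine Finset.sum_congr rfl fun n _ => ?_
          rw [hξ, hT]
  set P : H → H := fun w => ∑ n ∈ Λ, ((⟪ξ n, w⟫ : ℂ) / (σ n : ℂ)) • ξ n with hP
  have hσne : ∀ n ∈ Λ, (σ n : ℂ) ≠ 0 := by
    intro n hn
    rw [hΛ, Finset.mem_filter] at hn
    exact_mod_cast ne_of_gt (lt_trans hε hn.2)
  have hinner_P : ∀ (w : H), ∀ m ∈ Λ, (⟪ξ m, P w⟫ : ℂ) = ⟪ξ m, w⟫ := by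
    intro w m hm
    rw [hP]
    simp only [inner_sum, inner_smul_right, hxi]
    rw [Finset.sum_eq_single m]
    · rw [if_pos rfl, div_mul_cancel₀ _ (hσne m hm)]
    · intro n _ hn
      rw [if_neg (Ne.symm hn), mul_zero]
    · intro h; exact absurd hm h
  have horth : ∀ w : H, (⟪w - P w, P w⟫ : ℂ) = 0 := by
    intro w
    conv_lhs => rw [hP]
    simp only [inner_sum, inner_smul_right]
    refine Finset.sum_eq_zero fun n hn => ?_
    have h1 : (⟪ξ n, w - P w⟫ : ℂ) = 0 := by
      rw [inner_sub_right, hinner_P w n hn, sub_self]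
    have h2 : (⟪w - P w, ξ n⟫ : ℂ) = 0 := by
      rw [← inner_conj_symm, h1, map_zero]
    rw [h2, mul_zero]
  have hnorm1 : ∀ w : H, ‖w - P w‖ ≤ ‖w‖ := by
    intro w
    have h := norm_add_sq_eq_norm_sq_add_norm_sq_of_inner_eq_zero (w - P w) (P w) (horth w)
    rw [sub_add_cancel] at h
    nlinarith [norm_nonneg (P w), norm_nonneg (w - P w), norm_nonneg w]
  -- P (T z)
  have hPTz : P (T z) = ∑ n ∈ Λ, c n • ξ n := by
    rw [hP]
    refine Finset.sum_congr rfl fun n hn => ?_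
    congr 1
    rw [hTz, inner_sum]
    simp only [inner_smul_right, hxi]
    rw [Finset.sum_eq_single n]
    · rw [if_pos rfl, mul_div_assoc, div_self (hσne n hn), mul_one]
    · intro m _ hm
      rw [if_neg fun h => hm h.symm, mul_zero]
    · simp
  have hdiff : T z - P (T z) = ∑ n ∈ Finset.univ.filter (fun n => ¬ ε < σ n), c n • ξ n := by
    rw [hPTz, hTz, hΛ]
    rw [← Finset.sum_filter_add_sum_filter_not Finset.univ (fun n => ε < σ n) (fun n => c n • ξ n)]
    abel
  have hsq : ‖∑ n ∈ Finset.univ.filter (fun n => ¬ ε < σ n), c n • ξ n‖ ^ 2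
      = ∑ n ∈ Finset.univ.filter (fun n => ¬ ε < σ n), σ n * ‖c n‖ ^ 2 := by
    set w : H := ∑ n ∈ Finset.univ.filter (fun n => ¬ ε < σ n), c n • ξ n with hw
    have h1 : (⟪w, w⟫ : ℂ) = ∑ n ∈ Finset.univ.filter (fun n => ¬ ε < σ n),
        ((σ n * ‖c n‖ ^ 2 : ℝ) : ℂ) := by
      rw [hw, sum_inner]
      refine Finset.sum_congr rfl fun n hn => ?_
      rw [inner_smul_left, inner_sum]
      simp only [inner_smul_right, hxi]
      rw [Finset.sum_eq_single n]
      · rw [if_pos rfl, ← mul_assoc, RCLike.conj_mul, mul_comm]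
        norm_cast
        exact (Complex.ofReal_mul _ _).symm
      · intro m _ hm
        rw [if_neg fun h => hm h.symm, mul_zero]
      · intro h; exact absurd hn h
    have h2 : (⟪w, w⟫ : ℂ) = ((‖w‖ ^ 2 : ℝ) : ℂ) := by
      rw [inner_self_eq_norm_sq_to_K]
      norm_cast
    rw [h2, ← Complex.ofReal_sum] at h1
    exact_mod_cast h1
  have hz2 : ‖z‖ ^ 2 = ∑ n, ‖c n‖ ^ 2 := by
    have h1 : (⟪z, z⟫ : ℂ) = ∑ n, ((‖c n‖ ^ 2 : ℝ) : ℂ) := by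
      conv_lhs => rw [hzexp]
      rw [sum_inner]
      refine Finset.sum_congr rfl fun n _ => ?_
      rw [inner_smul_left, inner_sum]
      simp only [inner_smul_right, hvi]
      rw [Finset.sum_eq_single n]
      · rw [if_pos rfl, mul_one, RCLike.conj_mul]
        norm_cast
      · intro m _ hm
        rw [if_neg fun h => hm h.symm, mul_zero]
      · simp
    have h2 : (⟪z, z⟫ : ℂ) = ((‖z‖ ^ 2 : ℝ) : ℂ) := by
      rw [inner_self_eq_norm_sq_to_K]
      norm_cast
    rw [h2, ← Complex.ofReal_sum] at h1
    exact_mod_cast h1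
  have hnorm2 : ‖T z - P (T z)‖ ≤ Real.sqrt ε * ‖z‖ := by
    rw [hdiff]
    have hle : ‖∑ n ∈ Finset.univ.filter (fun n => ¬ ε < σ n), c n • ξ n‖ ^ 2
        ≤ ε * ‖z‖ ^ 2 := by
      rw [hsq, hz2]
      calc ∑ n ∈ Finset.univ.filter (fun n => ¬ ε < σ n), σ n * ‖c n‖ ^ 2
          ≤ ∑ n ∈ Finset.univ.filter (fun n => ¬ ε < σ n), ε * ‖c n‖ ^ 2 := by
            refine Finset.sum_le_sum fun n hn => ?_
            rw [Finset.mem_filter] at hn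
            have : σ n ≤ ε := not_lt.mp hn.2
            nlinarith [sq_nonneg ‖c n‖]
        _ = ε * ∑ n ∈ Finset.univ.filter (fun n => ¬ ε < σ n), ‖c n‖ ^ 2 := by
            rw [Finset.mul_sum]
        _ ≤ ε * ∑ n, ‖c n‖ ^ 2 := by
            refine mul_le_mul_of_nonneg_left ?_ hε.le
            exact Finset.sum_le_sum_of_subset_of_nonneg (Finset.filter_subset _ _)
              (fun n _ _ => sq_nonneg _)
    have h3 : (Real.sqrt ε * ‖z‖) ^ 2 = ε * ‖z‖ ^ 2 := by
      rw [mul_pow, Real.sq_sqrt hε.le]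
    have h4 : (0:ℝ) ≤ Real.sqrt ε * ‖z‖ := by positivity
    nlinarith [norm_nonneg (∑ n ∈ Finset.univ.filter (fun n => ¬ ε < σ n), c n • ξ n)]
  -- conclude
  have hPadd : P f = P (f - T z) + P (T z) := by
    rw [hP]
    rw [← Finset.sum_add_distrib]
    refine Finset.sum_congr rfl fun n _ => ?_
    rw [← add_smul, ← add_div, ← inner_add_right, sub_add_cancel]
  calc ‖f - P f‖ = ‖((f - T z) - P (f - T z)) + (T z - P (T z))‖ := by
        rw [hPadd]; congr 1; abel
    _ ≤ ‖(f - T z) - P (f - T z)‖ + ‖T z - P (T z)‖ := norm_add_le _ _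
    _ ≤ ‖f - T z‖ + Real.sqrt ε * ‖z‖ := add_le_add (hnorm1 _) hnorm2
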